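/- arXiv:2508.03815 — 7 statements merged into one kernel-verified Lean document; each statement's English description precedes it below -/
import Mathlib

section
/- (Theorem 2.1) For every integer ℓ ≥ 3, all u₁, u₂ ∈ V, every v ∈ V^{⊗(ℓ−2)} and all m, n ∈ ℤ, the consecutive coset Virasoro actions interchange: C^{(ℓ)}_m( u₁ ⊗ C^{(ℓ−1)}_n(u₂ ⊗ v) ) = (id_V ⊗ C^{(ℓ−1)}_n)( C^{(ℓ)}_m(u₁ ⊗ u₂ ⊗ v) ) in V^{⊗ℓ}. -/
/-!
Statement 0 (Theorem 2.1 of the paper).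

Context: `V` is a ℂ-vector space, `I` a finite index set, and the family `W k` plays the
role of the tensor powers `V^{⊗k}` (so `V = W 1`), with `tp k : W 1 →ₗ W k →ₗ W (k+1)`
the tensoring map `u ⊗ v`, whose pure tensors span `W (k+1)`.  `T k A n` are the
Leibniz-rule extensions of the locally truncating family `T 1 A n` of operators on `V`.
`sugawara (T k) k m` is the level-`k` Sugawara operator `L^{(k)}_m`, defined pointwise by
the (finitely supported) normal-ordered sum, `C k m` is the level-`k` coset Virasoro
operator `C^{(k)}_m`, determined on pure tensors by the GKO formula, and
`idT k f = id_V ⊗ f`.  We assume the GKO commutation relations `[C^{(k)}_m, T^A_n] = 0`.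

Conclusion: for every `ℓ ≥ 3` (written `ℓ = p + 3`), all `u₁ u₂ ∈ V`,
`v ∈ V^{⊗(ℓ-2)} = W (p+1)` and all `m n : ℤ`,
`C^{(ℓ)}_m (u₁ ⊗ C^{(ℓ-1)}_n (u₂ ⊗ v)) = (id_V ⊗ C^{(ℓ-1)}_n) (C^{(ℓ)}_m (u₁ ⊗ u₂ ⊗ v))`.
-/

open scoped BigOperators

namespace FTA

/-- The normal-ordered product `:S^A_a S^A_b:`. -/
noncomputable def nord {I : Type*} {M : Type*} [AddCommGroup M] [Module ℂ M]
    (S : I → ℤ → Module.End ℂ M) (A : I) (a b : ℤ) : Module.End ℂ M :=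
  if a ≤ b then S A a ∘ₗ S A b else S A b ∘ₗ S A a

/-- The level-`k` Sugawara operator `L^{(k)}_m`, defined pointwise by a finitely
supported sum (`finsum`). -/
noncomputable def sugawara {I : Type*} [Fintype I] {M : Type*} [AddCommGroup M] [Module ℂ M]
    (S : I → ℤ → Module.End ℂ M) (k : ℕ) (m : ℤ) (w : M) : M :=
  (2 * ((k : ℂ) + 2))⁻¹ • ∑ᶠ (A : I) (n : ℤ), nord S A n (m - n) w

lemma comm_nord {I : Type*} {M : Type*} [AddCommGroup M] [Module ℂ M]
    (S : I → ℤ → Module.End ℂ M) (f : Module.End ℂ M)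
    (hcomm : ∀ A j, f ∘ₗ S A j = S A j ∘ₗ f)
    (A : I) (a b : ℤ) (w : M) :
    f (nord S A a b w) = nord S A a b (f w) := by
  have h : ∀ (j : ℤ) (x : M), f (S A j x) = S A j (f x) := fun j x =>
    LinearMap.congr_fun (hcomm A j) x
  unfold nord
  split <;> simp only [LinearMap.comp_apply, h]

lemma comm_sugawara {I : Type*} [Fintype I] {M : Type*} [AddCommGroup M] [Module ℂ M]
    (S : I → ℤ → Module.End ℂ M) (f : Module.End ℂ M)
    (hcomm : ∀ A j, f ∘ₗ S A j = S A j ∘ₗ f)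
    (htrunc : ∀ w : M, ∃ N : ℤ, ∀ (A : I) (j : ℤ), N ≤ j → S A j w = 0)
    (k : ℕ) (m : ℤ) (w : M) :
    f (sugawara S k m w) = sugawara S k m (f w) := by
  obtain ⟨N, hN⟩ := htrunc w
  have hsupp : ∀ A : I,
      (Function.support fun j : ℤ => nord S A j (m - j) w) ⊆ Set.Ioo (m - N) N := by
    intro A j hj
    by_contra hcon
    apply hj
    simp only [Set.mem_Ioo, not_and_or, not_lt] at hcon
    show (nord S A j (m - j)) w = 0
    unfold nord
    split
    · rename_i hle
      rw [LinearMap.comp_apply, hN A (m - j) (by omega), map_zero]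
    · rename_i hle
      rw [LinearMap.comp_apply, hN A j (by omega), map_zero]
  unfold sugawara
  rw [map_smul]
  congr 1
  rw [finsum_eq_sum_of_fintype, finsum_eq_sum_of_fintype, map_sum]
  refine Finset.sum_congr rfl fun A _ => ?_
  have := AddMonoidHom.map_finsum (f := fun j : ℤ => nord S A j (m - j) w)
    (LinearMap.toAddMonoidHom f) ((Set.finite_Ioo _ _).subset (hsupp A))
  simp only [LinearMap.toAddMonoidHom_coe] at this
  rw [this]
  exact finsum_congr fun j => comm_nord S f hcomm A j (m - j) w

theorem coset_virasoro_consecutive_commute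
    {I : Type*} [Fintype I] {W : ℕ → Type*}
    [∀ k, AddCommGroup (W k)] [∀ k, Module ℂ (W k)]
    -- the tensoring map `V × V^{⊗k} → V^{⊗(k+1)}`, `(u, v) ↦ u ⊗ v`
    (tp : ∀ k, W 1 →ₗ[ℂ] (W k →ₗ[ℂ] W (k+1)))
    -- pure tensors span each tensor power
    (hspan : ∀ k, Submodule.span ℂ {x : W (k+1) | ∃ u v, x = tp k u v} = ⊤)
    -- the affine generators `T^A_n` on each tensor power
    (T : ∀ k, I → ℤ → Module.End ℂ (W k))
    -- local truncation
    (htrunc : ∀ k (w : W k), ∃ N : ℤ, ∀ (A : I) (n : ℤ), N ≤ n → T k A n w = 0)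
    -- Leibniz rule defining the extension of `T^A_n` to tensor powers
    (hLeib : ∀ (k : ℕ) (A : I) (n : ℤ) (u : W 1) (v : W k),
      T (k+1) A n (tp k u v) = tp k (T 1 A n u) v + tp k u (T k A n v))
    -- the coset Virasoro operators `C^{(k)}_m` (for `k ≥ 2`), via the GKO formula
    (C : ∀ k, ℤ → Module.End ℂ (W k))
    (hC : ∀ (k : ℕ), 1 ≤ k → ∀ (m : ℤ) (u : W 1) (v : W k),
      C (k+1) m (tp k u v)
        = tp k (sugawara (T 1) 1 m u) v + tp k u (sugawara (T k) k m v)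
          - sugawara (T (k+1)) (k+1) m (tp k u v))
    -- the operator `id_V ⊗ f` on `V ⊗ V^{⊗k}`
    (idT : ∀ k, Module.End ℂ (W k) → Module.End ℂ (W (k+1)))
    (hidT : ∀ (k : ℕ) (f : Module.End ℂ (W k)) (u : W 1) (v : W k),
      idT k f (tp k u v) = tp k u (f v))
    -- GKO commutation relations `[C^{(k)}_m, T^A_n] = 0` for `k ≥ 2`
    (hGKO : ∀ (k : ℕ), 2 ≤ k → ∀ (m n : ℤ) (A : I),
      C k m ∘ₗ T k A n = T k A n ∘ₗ C k m)
    -- `ℓ = p + 3 ≥ 3`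
    (p : ℕ) (u₁ u₂ : W 1) (v : W (p+1)) (m n : ℤ) :
    C (p+3) m (tp (p+2) u₁ (C (p+2) n (tp (p+1) u₂ v)))
      = idT (p+2) (C (p+2) n) (C (p+3) m (tp (p+2) u₁ (tp (p+1) u₂ v))) := by
  -- `id ⊗ C^{(p+2)}_n` commutes with every `T^{A}_j` on `W (p+3)`
  have hA : ∀ (A : I) (j : ℤ),
      idT (p+2) (C (p+2) n) ∘ₗ T (p+3) A j = T (p+3) A j ∘ₗ idT (p+2) (C (p+2) n) := by
    intro A j
    apply LinearMap.ext_on (hspan (p+2))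
    rintro x ⟨u, w, rfl⟩
    have hg : ∀ x, C (p+2) n (T (p+2) A j x) = T (p+2) A j (C (p+2) n x) := fun x =>
      LinearMap.congr_fun (hGKO (p+2) (by omega) n j A) x
    simp only [LinearMap.comp_apply]
    rw [hLeib, map_add, hidT, hidT, hidT, hLeib, hg]
  -- main computation
  have hgko2 : ∀ (A : I) (j : ℤ),
      C (p+2) n ∘ₗ T (p+2) A j = T (p+2) A j ∘ₗ C (p+2) n := fun A j =>
    hGKO (p+2) (by omega) n j A
  rw [hC (p+2) (by omega) m u₁ (C (p+2) n (tp (p+1) u₂ v)),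
      hC (p+2) (by omega) m u₁ (tp (p+1) u₂ v),
      map_sub, map_add, hidT, hidT,
      comm_sugawara (T (p+2)) (C (p+2) n) hgko2 (htrunc (p+2)) (p+2) m (tp (p+1) u₂ v),
      comm_sugawara (T (p+3)) (idT (p+2) (C (p+2) n)) hA (htrunc (p+3)) (p+3) m
        (tp (p+2) u₁ (tp (p+1) u₂ v)),
      hidT]

end FTA
end

section
/- (Corollary to Theorem 2.1) For every integer ℓ ≥ 3, every k with 1 ≤ k ≤ ℓ−2, all u₁, …, u_{k+1} ∈ V, every v ∈ V^{⊗(ℓ−k−1)} and all m, n ∈ ℤ: C^{(ℓ)}_m( u₁ ⊗ u₂ ⊗ ⋯ ⊗ u_k ⊗ C^{(ℓ−k)}_n(u_{k+1} ⊗ v) ) = (id_V^{⊗k} ⊗ C^{(ℓ−k)}_n)( C^{(ℓ)}_m(u₁ ⊗ ⋯ ⊗ u_{k+1} ⊗ v) ) in V^{⊗ℓ}. -/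
/-!
Statement 1 (Corollary to Theorem 2.1).

Same context as Theorem 2.1: `W k` plays the role of the tensor power `V^{⊗k}`
(`V = W 1`), `tp` is the tensoring map, `T` the Leibniz extensions of a locally
truncating family of operators, `sugawara` the Sugawara operators `L^{(k)}_m`, `C` the
coset Virasoro operators `C^{(k)}_m` (GKO formula), `idT k f = id_V ⊗ f`, and the GKO
commutation relations hold.

Conclusion: for every `ℓ ≥ 3` and `1 ≤ k ≤ ℓ - 2` (written `k = a + 1`,
`ℓ - k = b + 2`, so `ℓ = (b+2) + (a+1)`), all `u₁, …, u_{k+1} ∈ V`,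
`v ∈ V^{⊗(ℓ-k-1)} = W (b+1)` and all `m n : ℤ`,
`C^{(ℓ)}_m (u₁ ⊗ ⋯ ⊗ u_k ⊗ C^{(ℓ-k)}_n (u_{k+1} ⊗ v))
  = (id_V^{⊗k} ⊗ C^{(ℓ-k)}_n) (C^{(ℓ)}_m (u₁ ⊗ ⋯ ⊗ u_{k+1} ⊗ v))`.
-/

open scoped BigOperators

namespace FTA

/-- `prep tp j us x = us 0 ⊗ us 1 ⊗ ⋯ ⊗ us (j-1) ⊗ x` (right-nested). -/
noncomputable def prep {W : ℕ → Type*} [∀ k, AddCommGroup (W k)] [∀ k, Module ℂ (W k)]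
    (tp : ∀ k, W 1 →ₗ[ℂ] (W k →ₗ[ℂ] W (k+1))) :
    ∀ (j : ℕ), (Fin j → W 1) → ∀ {k : ℕ}, W k → W (k + j)
  | 0, _, _, x => x
  | (j+1), us, k, x => tp (k + j) (us 0) (prep tp j (fun i => us i.succ) x)

/-- `idIter idT j f = id_V^{⊗j} ⊗ f`. -/
noncomputable def idIter {W : ℕ → Type*} [∀ k, AddCommGroup (W k)] [∀ k, Module ℂ (W k)]
    (idT : ∀ k, Module.End ℂ (W k) → Module.End ℂ (W (k+1))) :
    ∀ (j : ℕ) {k : ℕ}, Module.End ℂ (W k) → Module.End ℂ (W (k + j))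
  | 0, _, f => f
  | (j+1), k, f => idT (k + j) (idIter idT j f)

theorem coset_virasoro_consecutive_commute_general
    {I : Type*} [Fintype I] {W : ℕ → Type*}
    [∀ k, AddCommGroup (W k)] [∀ k, Module ℂ (W k)]
    (tp : ∀ k, W 1 →ₗ[ℂ] (W k →ₗ[ℂ] W (k+1)))
    (hspan : ∀ k, Submodule.span ℂ {x : W (k+1) | ∃ u v, x = tp k u v} = ⊤)
    (T : ∀ k, I → ℤ → Module.End ℂ (W k))
    (htrunc : ∀ k (w : W k), ∃ N : ℤ, ∀ (A : I) (n : ℤ), N ≤ n → T k A n w = 0)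
    (hLeib : ∀ (k : ℕ) (A : I) (n : ℤ) (u : W 1) (v : W k),
      T (k+1) A n (tp k u v) = tp k (T 1 A n u) v + tp k u (T k A n v))
    (C : ∀ k, ℤ → Module.End ℂ (W k))
    (hC : ∀ (k : ℕ), 1 ≤ k → ∀ (m : ℤ) (u : W 1) (v : W k),
      C (k+1) m (tp k u v)
        = tp k (sugawara (T 1) 1 m u) v + tp k u (sugawara (T k) k m v)
          - sugawara (T (k+1)) (k+1) m (tp k u v))
    (idT : ∀ k, Module.End ℂ (W k) → Module.End ℂ (W (k+1)))
    (hidT : ∀ (k : ℕ) (f : Module.End ℂ (W k)) (u : W 1) (v : W k),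
      idT k f (tp k u v) = tp k u (f v))
    (hGKO : ∀ (k : ℕ), 2 ≤ k → ∀ (m n : ℤ) (A : I),
      C k m ∘ₗ T k A n = T k A n ∘ₗ C k m)
    -- `k = a + 1 ≥ 1`, `ℓ - k = b + 2 ≥ 2`, `ℓ = (b+2) + (a+1) ≥ 3`
    (a b : ℕ) (u : Fin (a+2) → W 1) (v : W (b+1)) (m n : ℤ) :
    C ((b+2) + (a+1)) m
        (prep tp (a+1) (fun i => u i.castSucc)
          (C (b+2) n (tp (b+1) (u (Fin.last (a+1))) v)))
      = idIter idT (a+1) (C (b+2) n)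
          (C ((b+2) + (a+1)) m
            (prep tp (a+1) (fun i => u i.castSucc)
              (tp (b+1) (u (Fin.last (a+1))) v))) := by

  -- pointwise commutation of an operator with `nord`, given commutation with all `T`s
  have hnord_comm : ∀ (k : ℕ) (f : Module.End ℂ (W k)),
      (∀ (A : I) (p : ℤ), f ∘ₗ T k A p = T k A p ∘ₗ f) →
      ∀ (A : I) (c d : ℤ) (w : W k),
        f (nord (T k) A c d w) = nord (T k) A c d (f w) := by
    intro k f hf A c d w
    have h : ∀ (p : ℤ) (x : W k), f (T k A p x) = T k A p (f x) :=
      fun p x => LinearMap.congr_fun (hf A p) x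
    unfold nord
    split <;> simp [LinearMap.comp_apply, h]
  -- vanishing of `nord` for large indices
  have hnord0 : ∀ (k : ℕ) (w : W k) (N : ℤ),
      (∀ (A : I) (p : ℤ), N ≤ p → T k A p w = 0) →
      ∀ (A : I) (c d : ℤ), (N ≤ c ∨ N ≤ d) → nord (T k) A c d w = 0 := by
    intro k w N hN A c d hcd
    unfold nord
    split
    · rename_i hle
      have hd : N ≤ d := hcd.elim (fun h => h.trans hle) id
      simp [LinearMap.comp_apply, hN A d hd]
    · rename_i hlt
      have hc : N ≤ c := hcd.elim id (fun h => h.trans (le_of_not_ge hlt))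
      simp [LinearMap.comp_apply, hN A c hc]
  -- commutation with the Sugawara operators
  have hsug_comm : ∀ (k : ℕ) (f : Module.End ℂ (W k)),
      (∀ (A : I) (p : ℤ), f ∘ₗ T k A p = T k A p ∘ₗ f) →
      ∀ (m' : ℤ) (w : W k), f (sugawara (T k) k m' w) = sugawara (T k) k m' (f w) := by
    intro k f hf m' w
    obtain ⟨N₁, hN₁⟩ := htrunc k w
    obtain ⟨N₂, hN₂⟩ := htrunc k (f w)
    set N := max N₁ N₂ with hNdef
    have hNw : ∀ (A : I) (p : ℤ), N ≤ p → T k A p w = 0 :=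
      fun A p hp => hN₁ A p ((le_max_left _ _).trans hp)
    have hNfw : ∀ (A : I) (p : ℤ), N ≤ p → T k A p (f w) = 0 :=
      fun A p hp => hN₂ A p ((le_max_right _ _).trans hp)
    have hsub : ∀ (w' : W k), (∀ (A : I) (p : ℤ), N ≤ p → T k A p w' = 0) →
        ∀ A : I, (Function.support fun nn => nord (T k) A nn (m' - nn) w')
          ⊆ ↑(Finset.Ioo (m' - N) N) := by
      intro w' hw' A nn hnn
      simp only [Function.mem_support] at hnn
      simp only [Finset.coe_Ioo, Set.mem_Ioo]
      constructor
      · by_contra hcon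
        exact hnn (hnord0 k w' N hw' A nn (m' - nn) (Or.inr (by omega)))
      · by_contra hcon
        exact hnn (hnord0 k w' N hw' A nn (m' - nn) (Or.inl (by omega)))
    unfold sugawara
    rw [map_smul]
    congr 1
    rw [finsum_eq_sum_of_fintype, finsum_eq_sum_of_fintype, map_sum]
    refine Finset.sum_congr rfl fun A _ => ?_
    rw [finsum_eq_sum_of_support_subset _ (hsub w hNw A),
        finsum_eq_sum_of_support_subset _ (hsub (f w) hNfw A), map_sum]
    exact Finset.sum_congr rfl fun nn _ => hnord_comm k f hf A nn (m' - nn) w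
  -- Lemma A: `id^{⊗j} ⊗ C^{(b+2)}_n` commutes with all `T`s
  have lemA : ∀ (j : ℕ) (A : I) (p : ℤ),
      idIter idT j (C (b+2) n) ∘ₗ T (b+2+j) A p
        = T (b+2+j) A p ∘ₗ idIter idT j (C (b+2) n) := by
    intro j
    induction j with
    | zero => intro A p; exact hGKO (b+2) (by omega) n p A
    | succ j ih =>
      intro A p
      apply LinearMap.ext_on (hspan (b+2+j))
      rintro x ⟨u', y, rfl⟩
      simp only [LinearMap.comp_apply]
      show (idT (b+2+j) (idIter idT j (C (b+2) n))) ((T (b+2+j+1) A p) (tp (b+2+j) u' y))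
          = (T (b+2+j+1) A p) ((idT (b+2+j) (idIter idT j (C (b+2) n))) (tp (b+2+j) u' y))
      have ihp : ∀ z : W (b+2+j), idIter idT j (C (b+2) n) ((T (b+2+j) A p) z)
          = (T (b+2+j) A p) (idIter idT j (C (b+2) n) z) := fun z => by
        simpa [LinearMap.comp_apply] using LinearMap.congr_fun (ih A p) z
      rw [hLeib (b+2+j) A p u' y, map_add, hidT, hidT, hidT, ihp y, hLeib]
  -- Lemma C: `idIter` and `prep` are compatible
  have lemC : ∀ (j : ℕ) (us : Fin j → W 1) (f : Module.End ℂ (W (b+2))) (x : W (b+2)),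
      idIter idT j f (prep tp j us x) = prep tp j us (f x) := by
    intro j
    induction j with
    | zero => intro us f x; rfl
    | succ j ih =>
      intro us f x
      show idT (b+2+j) (idIter idT j f) (tp (b+2+j) (us 0) (prep tp j (fun i => us i.succ) x))
          = tp (b+2+j) (us 0) (prep tp j (fun i => us i.succ) (f x))
      rw [hidT, ih]
  -- Lemma D: coset Virasoro operators commute
  have lemD : ∀ (j : ℕ) (m' : ℤ),
      C (b+2+(j+1)) m' ∘ₗ idIter idT (j+1) (C (b+2) n)
        = idIter idT (j+1) (C (b+2) n) ∘ₗ C (b+2+(j+1)) m' := by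
    intro j m'
    apply LinearMap.ext_on (hspan (b+2+j))
    rintro x ⟨u', y, rfl⟩
    simp only [LinearMap.comp_apply]
    have hG : ∀ z : W (b+2+j), (idT (b+2+j) (idIter idT j (C (b+2) n))) (tp (b+2+j) u' z)
        = tp (b+2+j) u' (idIter idT j (C (b+2) n) z) := fun z => hidT _ _ _ _
    show (C (b+2+j+1) m') ((idT (b+2+j) (idIter idT j (C (b+2) n))) (tp (b+2+j) u' y))
        = (idT (b+2+j) (idIter idT j (C (b+2) n))) ((C (b+2+j+1) m') (tp (b+2+j) u' y))
    rw [hG y, hC (b+2+j) (by omega) m' u' y,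
      hC (b+2+j) (by omega) m' u' (idIter idT j (C (b+2) n) y),
      map_sub, map_add, hidT, hidT,
      hsug_comm (b+2+j) _ (lemA j) m' y,
      show (idT (b+2+j) (idIter idT j (C (b+2) n)))
            (sugawara (T (b+2+j+1)) (b+2+j+1) m' (tp (b+2+j) u' y))
          = sugawara (T (b+2+j+1)) (b+2+j+1) m'
            ((idT (b+2+j) (idIter idT j (C (b+2) n))) (tp (b+2+j) u' y)) from
        hsug_comm (b+2+(j+1)) _ (lemA (j+1)) m' (tp (b+2+j) u' y), hidT]
  -- conclusion
  rw [← lemC (a+1) (fun i => u i.castSucc) (C (b+2) n) (tp (b+1) (u (Fin.last (a+1))) v)]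
  exact LinearMap.congr_fun (lemD a m)
    (prep tp (a+1) (fun i => u i.castSucc) (tp (b+1) (u (Fin.last (a+1))) v))


end FTA
end

section
/- Distinct coset Virasoro algebras commute on the tensor power: for every integer ℓ ≥ 3, all k, k' with 2 ≤ k < k' ≤ ℓ and all m, n ∈ ℤ, the operators (id_V^{⊗(ℓ−k)} ⊗ C^{(k)}_m) and (id_V^{⊗(ℓ−k')} ⊗ C^{(k')}_n) on V^{⊗ℓ} commute: (id^{⊗(ℓ−k)} ⊗ C^{(k)}_m) ∘ (id^{⊗(ℓ−k')} ⊗ C^{(k')}_n) = (id^{⊗(ℓ−k')} ⊗ C^{(k')}_n) ∘ (id^{⊗(ℓ−k)} ⊗ C^{(k)}_m). -/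
/-!
Statement 2: distinct coset Virasoro algebras commute on the tensor power.

Same context as before: `W k` plays the role of the tensor power `V^{⊗k}` (`V = W 1`),
`tp` is the tensoring map (whose pure tensors span), `T` the Leibniz extensions of a
locally truncating family of operators, `sugawara` the Sugawara operators `L^{(k)}_m`,
`C` the coset Virasoro operators `C^{(k)}_m` (GKO formula), `idT k f = id_V ⊗ f`, and
the GKO commutation relations hold.

Conclusion: for `ℓ ≥ 3`, `2 ≤ k < k' ≤ ℓ` and `m n : ℤ`, the operators
`id^{⊗(ℓ-k)} ⊗ C^{(k)}_m` and `id^{⊗(ℓ-k')} ⊗ C^{(k')}_n` on `V^{⊗ℓ}` commute.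
(The hypotheses `2 ≤ k < k' ≤ ℓ` force `ℓ ≥ 3`.)
-/

open scoped BigOperators

namespace FTA

/-- `idLift idT f h = id_V^{⊗(L-k)} ⊗ f : End (V^{⊗L})` for `f : End (V^{⊗k})`, `k ≤ L`. -/
noncomputable def idLift {W : ℕ → Type*} [∀ k, AddCommGroup (W k)] [∀ k, Module ℂ (W k)]
    (idT : ∀ k, Module.End ℂ (W k) → Module.End ℂ (W (k+1)))
    {k : ℕ} (f : Module.End ℂ (W k)) : ∀ {L : ℕ}, k ≤ L → Module.End ℂ (W L) :=
  Nat.leRec f (fun L _ g => idT L g)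

section Aux
variable {I : Type*} [Fintype I] {M : Type*} [AddCommGroup M] [Module ℂ M]

lemma nord_support_finite (S : I → ℤ → Module.End ℂ M) (A : I) (m : ℤ) (w : M)
    (N : ℤ) (hN : ∀ (B : I) (n : ℤ), N ≤ n → S B n w = 0) :
    (Function.support fun n => nord S A n (m - n) w).Finite := by
  apply Set.Finite.subset (Set.finite_Ioo (m - N) N)
  intro n hn
  simp only [Function.mem_support] at hn
  by_contra hmem
  apply hn
  simp only [Set.mem_Ioo, not_and_or, not_lt] at hmem
  unfold nord
  rcases hmem with h1 | h2
  · have hmn : N ≤ m - n := by omega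
    by_cases hle : n ≤ m - n
    · simp [hle, LinearMap.comp_apply, hN A _ hmn]
    · have hNn : N ≤ n := by omega
      simp [hle, LinearMap.comp_apply, hN A _ hNn]
  · by_cases hle : n ≤ m - n
    · have hmn : N ≤ m - n := le_trans h2 hle
      simp [hle, LinearMap.comp_apply, hN A _ hmn]
    · simp [hle, LinearMap.comp_apply, hN A _ h2]

lemma commute_nord (S : I → ℤ → Module.End ℂ M) (F : Module.End ℂ M)
    (hF : ∀ (A : I) (p : ℤ) (x : M), F (S A p x) = S A p (F x)) (A : I) (a b : ℤ) (x : M) :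
    F (nord S A a b x) = nord S A a b (F x) := by
  unfold nord
  split <;> simp [LinearMap.comp_apply, hF]

lemma commute_sugawara (S : I → ℤ → Module.End ℂ M)
    (htr : ∀ w : M, ∃ N : ℤ, ∀ (A : I) (n : ℤ), N ≤ n → S A n w = 0)
    (F : Module.End ℂ M) (hF : ∀ (A : I) (p : ℤ) (x : M), F (S A p x) = S A p (F x))
    (k : ℕ) (m : ℤ) (w : M) :
    F (sugawara S k m w) = sugawara S k m (F w) := by
  obtain ⟨N, hN⟩ := htr w
  unfold sugawara
  rw [map_smul]
  congr 1
  have h1 : ∀ A : I, F (∑ᶠ n : ℤ, nord S A n (m - n) w)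
      = ∑ᶠ n : ℤ, nord S A n (m - n) (F w) := by
    intro A
    have := F.toAddMonoidHom.map_finsum (nord_support_finite S A m w N hN)
    rw [show F (∑ᶠ n : ℤ, nord S A n (m - n) w)
        = F.toAddMonoidHom (∑ᶠ n : ℤ, nord S A n (m - n) w) from rfl, this]
    exact finsum_congr fun nn => commute_nord S F hF A nn (m - nn) w
  have h2 := F.toAddMonoidHom.map_finsum
    (f := fun A : I => ∑ᶠ n : ℤ, nord S A n (m - n) w) (Set.toFinite _)
  rw [show F (∑ᶠ (A : I) (n : ℤ), nord S A n (m - n) w)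
      = F.toAddMonoidHom (∑ᶠ (A : I) (n : ℤ), nord S A n (m - n) w) from rfl, h2]
  exact finsum_congr fun A => h1 A

end Aux

theorem distinct_coset_virasoro_commute
    {I : Type*} [Fintype I] {W : ℕ → Type*}
    [∀ k, AddCommGroup (W k)] [∀ k, Module ℂ (W k)]
    (tp : ∀ k, W 1 →ₗ[ℂ] (W k →ₗ[ℂ] W (k+1)))
    (hspan : ∀ k, Submodule.span ℂ {x : W (k+1) | ∃ u v, x = tp k u v} = ⊤)
    (T : ∀ k, I → ℤ → Module.End ℂ (W k))
    (htrunc : ∀ k (w : W k), ∃ N : ℤ, ∀ (A : I) (n : ℤ), N ≤ n → T k A n w = 0)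
    (hLeib : ∀ (k : ℕ) (A : I) (n : ℤ) (u : W 1) (v : W k),
      T (k+1) A n (tp k u v) = tp k (T 1 A n u) v + tp k u (T k A n v))
    (C : ∀ k, ℤ → Module.End ℂ (W k))
    (hC : ∀ (k : ℕ), 1 ≤ k → ∀ (m : ℤ) (u : W 1) (v : W k),
      C (k+1) m (tp k u v)
        = tp k (sugawara (T 1) 1 m u) v + tp k u (sugawara (T k) k m v)
          - sugawara (T (k+1)) (k+1) m (tp k u v))
    (idT : ∀ k, Module.End ℂ (W k) → Module.End ℂ (W (k+1)))
    (hidT : ∀ (k : ℕ) (f : Module.End ℂ (W k)) (u : W 1) (v : W k),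
      idT k f (tp k u v) = tp k u (f v))
    (hGKO : ∀ (k : ℕ), 2 ≤ k → ∀ (m n : ℤ) (A : I),
      C k m ∘ₗ T k A n = T k A n ∘ₗ C k m)
    (ℓ k k' : ℕ) (hk : 2 ≤ k) (hkk' : k < k') (hk'ℓ : k' ≤ ℓ) (m n : ℤ) :
    idLift idT (C k m) (hkk'.le.trans hk'ℓ) ∘ₗ idLift idT (C k' n) hk'ℓ
      = idLift idT (C k' n) hk'ℓ ∘ₗ idLift idT (C k m) (hkk'.le.trans hk'ℓ) := by
  -- extensionality on pure tensors
  have hext : ∀ (j : ℕ) (f g : Module.End ℂ (W (j+1))),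
      (∀ u v, f (tp j u v) = g (tp j u v)) → f = g := by
    intro j f g h
    ext x
    have hx : x ∈ Submodule.span ℂ {x : W (j+1) | ∃ u v, x = tp j u v} := by
      rw [hspan j]; exact Submodule.mem_top
    induction hx using Submodule.span_induction with
    | mem x hx => obtain ⟨u, v, rfl⟩ := hx; exact h u v
    | zero => simp
    | add x y _ _ hx hy => simp [map_add, hx, hy]
    | smul c x _ hx => simp [map_smul, hx]
  -- idLift at successor
  have hliftsucc : ∀ (a : ℕ) (f : Module.End ℂ (W a)) (L : ℕ) (h : a ≤ L) (h' : a ≤ L+1),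
      idLift idT f h' = idT L (idLift idT f h) := by
    intro a f L h h'
    exact Nat.leRec_succ _ _ h
  have hliftself : ∀ (a : ℕ) (f : Module.End ℂ (W a)) (h : a ≤ a),
      idLift idT f h = f := by
    intro a f h
    exact Nat.leRec_self _ _
  -- lifted coset operators commute with T
  have hTcomm : ∀ (a : ℕ), 2 ≤ a → ∀ (mm : ℤ) (L : ℕ) (h : a ≤ L) (A : I) (p : ℤ),
      idLift idT (C a mm) h ∘ₗ T L A p = T L A p ∘ₗ idLift idT (C a mm) h := by
    intro a ha mm
    refine Nat.le_induction ?_ ?_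
    · intro A p
      rw [hliftself]
      exact hGKO a ha mm p A
    · intro L hL IH A p
      rw [hliftsucc a (C a mm) L hL]
      have IH' : ∀ x, idLift idT (C a mm) hL (T L A p x)
          = T L A p (idLift idT (C a mm) hL x) := by
        intro x
        exact congrFun (congrArg (fun (f : Module.End ℂ (W L)) => (f : W L → W L)) (IH A p)) x
      apply hext L
      intro u v
      simp only [LinearMap.comp_apply, hLeib, map_add, hidT, IH' v]
  have hTcomm' : ∀ (a : ℕ), 2 ≤ a → ∀ (mm : ℤ) (L : ℕ) (h : a ≤ L) (A : I) (p : ℤ) (x : W L),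
      idLift idT (C a mm) h (T L A p x) = T L A p (idLift idT (C a mm) h x) := by
    intro a ha mm L h A p x
    exact congrFun (congrArg (fun (f : Module.End ℂ (W L)) => (f : W L → W L))
      (hTcomm a ha mm L h A p)) x
  -- idT is multiplicative
  have hcompose : ∀ (L : ℕ) (f g : Module.End ℂ (W L)),
      idT L f ∘ₗ idT L g = idT L (f ∘ₗ g) := by
    intro L f g
    apply hext L
    intro u v
    simp [LinearMap.comp_apply, hidT]
  -- decompose k'
  obtain ⟨j, rfl⟩ : ∃ j, k' = j + 1 := ⟨k' - 1, by omega⟩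
  have hkj : k ≤ j := by omega
  have hj1 : 1 ≤ j := by omega
  -- base: the lift of C k m to level j+1 commutes with C (j+1) n
  have hbase : ∀ (h : k ≤ j + 1),
      idLift idT (C k m) h ∘ₗ C (j+1) n = C (j+1) n ∘ₗ idLift idT (C k m) h := by
    intro h
    rw [hliftsucc k (C k m) j hkj]
    set F' := idLift idT (C k m) hkj with hF'
    have hF'T : ∀ (A : I) (p : ℤ) (x : W j), F' (T j A p x) = T j A p (F' x) :=
      fun A p x => hTcomm' k hk m j hkj A p x
    have hFT : ∀ (A : I) (p : ℤ) (x : W (j+1)),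
        idT j F' (T (j+1) A p x) = T (j+1) A p (idT j F' x) := by
      intro A p x
      have := hTcomm' k hk m (j+1) (by omega) A p x
      rwa [hliftsucc k (C k m) j hkj] at this
    apply hext j
    intro u v
    have hsugF' : F' (sugawara (T j) j n v) = sugawara (T j) j n (F' v) :=
      commute_sugawara (T j) (htrunc j) F' hF'T j n v
    have hsugF : idT j F' (sugawara (T (j+1)) (j+1) n (tp j u v))
        = sugawara (T (j+1)) (j+1) n (idT j F' (tp j u v)) :=
      commute_sugawara (T (j+1)) (htrunc (j+1)) (idT j F') hFT (j+1) n (tp j u v)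
    simp only [LinearMap.comp_apply, hC j hj1 n, map_add, map_sub, hidT, hsugF', hsugF]
  -- induct the commuting pair up to ℓ
  have main : ∀ (L : ℕ) (h : j + 1 ≤ L) (h' : k ≤ L),
      idLift idT (C k m) h' ∘ₗ idLift idT (C (j+1) n) h
        = idLift idT (C (j+1) n) h ∘ₗ idLift idT (C k m) h' := by
    intro L h
    induction L, h using Nat.le_induction with
    | base =>
      intro h'
      rw [hliftself (j+1) (C (j+1) n)]
      exact hbase h'
    | succ L hL IH =>
      intro h'
      rw [hliftsucc (j+1) (C (j+1) n) L hL, hliftsucc k (C k m) L (by omega),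
        hcompose, hcompose, IH (by omega)]
  exact main ℓ hk'ℓ (hkk'.le.trans hk'ℓ)

end FTA
end

section
/- The coset Virasoro operator acting on the last ℓ−1 tensor factors commutes with the level-ℓ Sugawara operator: for every integer ℓ ≥ 3 and all m, n ∈ ℤ, (id_V ⊗ C^{(ℓ−1)}_n) ∘ L^{(ℓ)}_m = L^{(ℓ)}_m ∘ (id_V ⊗ C^{(ℓ−1)}_n) as operators on V^{⊗ℓ}. -/
open scoped BigOperators

namespace FTA

theorem idTensor_coset_commutes_with_sugawara
    {I : Type*} [Fintype I] {W : ℕ → Type*}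
    [∀ k, AddCommGroup (W k)] [∀ k, Module ℂ (W k)]
    (tp : ∀ k, W 1 →ₗ[ℂ] (W k →ₗ[ℂ] W (k+1)))
    (hspan : ∀ k, Submodule.span ℂ {x : W (k+1) | ∃ u v, x = tp k u v} = ⊤)
    (T : ∀ k, I → ℤ → Module.End ℂ (W k))
    (htrunc : ∀ k (w : W k), ∃ N : ℤ, ∀ (A : I) (n : ℤ), N ≤ n → T k A n w = 0)
    (hLeib : ∀ (k : ℕ) (A : I) (n : ℤ) (u : W 1) (v : W k),
      T (k+1) A n (tp k u v) = tp k (T 1 A n u) v + tp k u (T k A n v))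
    (C : ∀ k, ℤ → Module.End ℂ (W k))
    (hC : ∀ (k : ℕ), 1 ≤ k → ∀ (m : ℤ) (u : W 1) (v : W k),
      C (k+1) m (tp k u v)
        = tp k (sugawara (T 1) 1 m u) v + tp k u (sugawara (T k) k m v)
          - sugawara (T (k+1)) (k+1) m (tp k u v))
    (idT : ∀ k, Module.End ℂ (W k) → Module.End ℂ (W (k+1)))
    (hidT : ∀ (k : ℕ) (f : Module.End ℂ (W k)) (u : W 1) (v : W k),
      idT k f (tp k u v) = tp k u (f v))
    (hGKO : ∀ (k : ℕ), 2 ≤ k → ∀ (m n : ℤ) (A : I),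
      C k m ∘ₗ T k A n = T k A n ∘ₗ C k m)
    -- `ℓ = p + 3 ≥ 3`
    (p : ℕ) (m n : ℤ) (w : W (p+3)) :
    idT (p+2) (C (p+2) n) (sugawara (T (p+3)) (p+3) m w)
      = sugawara (T (p+3)) (p+3) m (idT (p+2) (C (p+2) n) w) := by
  set D := idT (p+2) (C (p+2) n) with hD
  -- D commutes with each T (p+3) A j
  have hcomm : ∀ (A : I) (j : ℤ) (x : W (p+3)),
      D (T (p+3) A j x) = T (p+3) A j (D x) := by
    intro A j
    have hext : D ∘ₗ T (p+3) A j = T (p+3) A j ∘ₗ D := by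
      apply LinearMap.ext_on (hspan (p+2))
      rintro x ⟨u, v, rfl⟩
      have hG : C (p+2) n (T (p+2) A j v) = T (p+2) A j (C (p+2) n v) := by
        have := hGKO (p+2) (by omega) n j A
        exact LinearMap.congr_fun this v
      simp only [LinearMap.comp_apply, hD]
      rw [show (T (p+3) A j) = (T ((p+2)+1) A j) from rfl,
        hLeib (p+2) A j u v, map_add, hidT, hidT, hidT, hLeib, hG]
    intro x
    exact LinearMap.congr_fun hext x
  -- D commutes with each normal-ordered product
  have hnord : ∀ (A : I) (a b : ℤ) (x : W (p+3)),
      D (nord (T (p+3)) A a b x) = nord (T (p+3)) A a b (D x) := by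
    intro A a b x
    unfold nord
    split <;> simp only [LinearMap.comp_apply, hcomm]
  -- finite support of the inner sums
  obtain ⟨N, hN⟩ := htrunc (p+3) w
  have hsupp : ∀ A : I,
      (Function.support fun j : ℤ => nord (T (p+3)) A j (m - j) w).Finite := by
    intro A
    apply Set.Finite.subset (Set.finite_Ioo (m - N) N)
    intro j hj
    simp only [Function.mem_support] at hj
    by_contra hmem
    apply hj
    simp only [Set.mem_Ioo, not_and_or, not_lt] at hmem
    unfold nord
    split_ifs with h
    · simp only [LinearMap.comp_apply]
      rcases hmem with h1 | h1
      · rw [hN A (m - j) (by omega), map_zero]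
      · rw [hN A (m - j) (by omega), map_zero]
    · simp only [LinearMap.comp_apply]
      rcases hmem with h1 | h1
      · rw [hN A j (by omega), map_zero]
      · rw [hN A j (by omega), map_zero]
  -- now compute
  unfold sugawara
  rw [map_smul]
  congr 1
  rw [finsum_eq_sum_of_fintype, finsum_eq_sum_of_fintype, map_sum]
  refine Finset.sum_congr rfl fun A _ => ?_
  calc D (∑ᶠ (j : ℤ), nord (T (p+3)) A j (m - j) w)
      = ∑ᶠ (j : ℤ), D (nord (T (p+3)) A j (m - j) w) :=
        D.toAddMonoidHom.map_finsum (hsupp A)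
    _ = ∑ᶠ (j : ℤ), nord (T (p+3)) A j (m - j) (D w) :=
        finsum_congr fun j => hnord A j (m - j) w

end FTA
end

section
/- (eq. 1.3, proved in Appendix A of [CKMN]) For every integer n ≥ 2, L_n = ⁅L₁, L_{n−1}⁆, i.e. the degree-n piece of the grading equals the span of brackets of degree-1 elements with degree-(n−1) elements. -/
/-!
Let `G n = iterBracket K L₁ n` be the span of the brackets `⁅x₁, ⁅x₂, … , xₙ⁆⁆` with all
`xᵢ ∈ L₁`, so that `G (n + 1) = ⁅L₁, G n⁆`. The grading gives `G n ≤ L_n`, and the Jacobi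
identity shows `⁅G i, G j⁆ ≤ G (i + j)`, so `⨆ n, G n` is a Lie subalgebra; it contains `L₁`,
hence every `L_n`. Thus `L_n ≤ G n ⊔ ⨆_{m ≠ n} L_m`, and since `G n ≤ L_n` and `L_n` is
independent from the other pieces, the modular law gives `L_n = G n`. Then
`L_n = ⁅L₁, G (n - 1)⁆ = ⁅L₁, L_{n-1}⁆`.
-/

/-- The `K`-submodule spanned by brackets `⁅x, y⁆` with `x ∈ M`, `y ∈ N`. -/
def subBracket (K : Type*) [Field K] {L : Type*} [LieRing L] [LieAlgebra K L]
    (M N : Submodule K L) : Submodule K L :=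
  Submodule.span K {z : L | ∃ x ∈ M, ∃ y ∈ N, z = ⁅x, y⁆}

section

variable {K : Type*} [Field K] {L : Type*} [LieRing L] [LieAlgebra K L]

theorem lie_mem_subBracket {M N : Submodule K L} {x y : L} (hx : x ∈ M) (hy : y ∈ N) :
    ⁅x, y⁆ ∈ subBracket K M N :=
  Submodule.subset_span ⟨x, hx, y, hy, rfl⟩

theorem subBracket_le_iff {M N P : Submodule K L} :
    subBracket K M N ≤ P ↔ ∀ x ∈ M, ∀ y ∈ N, ⁅x, y⁆ ∈ P := by
  simp only [subBracket, Submodule.span_le, Set.subset_def, SetLike.mem_coe]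
  constructor
  · exact fun h x hx y hy => h _ ⟨x, hx, y, hy, rfl⟩
  · rintro h _ ⟨x, hx, y, hy, rfl⟩
    exact h x hx y hy

theorem subBracket_mono_right (M : Submodule K L) {N N' : Submodule K L} (h : N ≤ N') :
    subBracket K M N ≤ subBracket K M N' :=
  subBracket_le_iff.2 fun _ hx _ hy => lie_mem_subBracket hx (h hy)

variable (K) in
def iterBracket (V : Submodule K L) : ℕ → Submodule K L
  | 0 => ⊥
  | 1 => V
  | n + 2 => subBracket K V (iterBracket V (n + 1))

variable {V : Submodule K L}

theorem lie_mem_iterBracket_succ {a y : L} (ha : a ∈ V) {j : ℕ} (hy : y ∈ iterBracket K V j) :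
    ⁅a, y⁆ ∈ iterBracket K V (j + 1) := by
  cases j with
  | zero =>
    rw [show y = 0 from (Submodule.mem_bot K).1 hy, lie_zero]
    exact zero_mem _
  | succ j => exact lie_mem_subBracket ha hy

theorem lie_mem_iterBracket {i j : ℕ} {x y : L} (hx : x ∈ iterBracket K V i)
    (hy : y ∈ iterBracket K V j) : ⁅x, y⁆ ∈ iterBracket K V (i + j) := by
  induction i using Nat.strong_induction_on generalizing x y j with
  | _ i ih =>
  obtain _ | _ | k := i
  · rw [show x = 0 from (Submodule.mem_bot K).1 hx, zero_lie]
    exact zero_mem _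
  · exact add_comm j 1 ▸ lie_mem_iterBracket_succ hx hy
  · induction hx using Submodule.span_induction with
    | mem _ hz =>
      obtain ⟨a, ha, b, hb, rfl⟩ := hz
      have hab : ⁅a, ⁅b, y⁆⁆ ∈ iterBracket K V (k + 1 + j + 1) :=
        lie_mem_iterBracket_succ ha (ih (k + 1) (by omega) hb hy)
      have hba : ⁅b, ⁅a, y⁆⁆ ∈ iterBracket K V (k + 1 + (j + 1)) :=
        ih (k + 1) (by omega) hb (lie_mem_iterBracket_succ ha hy)
      rw [lie_lie, show k + 2 + j = k + 1 + j + 1 by omega]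
      rw [show k + 1 + (j + 1) = k + 1 + j + 1 by omega] at hba
      exact sub_mem hab hba
    | zero => rw [zero_lie]; exact zero_mem _
    | add _ _ _ _ h₁ h₂ => rw [add_lie]; exact add_mem h₁ h₂
    | smul c _ _ h => rw [smul_lie]; exact Submodule.smul_mem _ c h

theorem lie_mem_iSup_of_lie_mem {ι : Type*} [Add ι] {G : ι → Submodule K L}
    (hG : ∀ i j x y, x ∈ G i → y ∈ G j → ⁅x, y⁆ ∈ G (i + j)) {x y : L}
    (hx : x ∈ ⨆ i, G i) (hy : y ∈ ⨆ i, G i) : ⁅x, y⁆ ∈ ⨆ i, G i := by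
  induction hx using Submodule.iSup_induction' with
  | mem i x hx =>
    induction hy using Submodule.iSup_induction' with
    | mem j y hy => exact Submodule.mem_iSup_of_mem (i + j) (hG i j x y hx hy)
    | zero => rw [lie_zero]; exact zero_mem _
    | add _ _ _ _ h₁ h₂ => rw [lie_add]; exact add_mem h₁ h₂
  | zero => rw [zero_lie]; exact zero_mem _
  | add _ _ _ _ h₁ h₂ => rw [add_lie]; exact add_mem h₁ h₂

variable (V) in
theorem lieSpan_le_iSup_iterBracket :
    (LieSubalgebra.lieSpan K L (V : Set L)).toSubmodule ≤ ⨆ n, iterBracket K V n := by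
  let S : LieSubalgebra K L :=
    { (⨆ n, iterBracket K V n) with
      lie_mem' := lie_mem_iSup_of_lie_mem fun _ _ _ _ => lie_mem_iterBracket }
  have hVS : (V : Set L) ⊆ S := fun _ hv => Submodule.mem_iSup_of_mem 1 hv
  exact LieSubalgebra.lieSpan_le.2 hVS

theorem iterBracket_le {F : ℕ → Submodule K L}
    (hgrad : ∀ i j : ℕ, 1 ≤ i → 1 ≤ j → subBracket K (F i) (F j) ≤ F (i + j)) :
    ∀ n, iterBracket K (F 1) n ≤ F n
  | 0 => bot_le
  | 1 => le_rfl
  | n + 2 => calc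
      iterBracket K (F 1) (n + 2) ≤ subBracket K (F 1) (F (n + 1)) :=
        subBracket_mono_right _ (iterBracket_le hgrad (n + 1))
      _ ≤ F (n + 2) := add_comm 1 (n + 1) ▸ hgrad 1 (n + 1) le_rfl (by omega)

theorem iSup_iterBracket_le {F : ℕ → Submodule K L}
    (hgrad : ∀ i j : ℕ, 1 ≤ i → 1 ≤ j → subBracket K (F i) (F j) ≤ F (i + j)) (n : ℕ) :
    ⨆ m, iterBracket K (F 1) m ≤
      iterBracket K (F 1) n ⊔ ⨆ (m : ℕ) (_ : 1 ≤ m) (_ : m ≠ n), F m := by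
  refine iSup_le fun m => ?_
  rcases Nat.eq_zero_or_pos m with rfl | hm
  · exact bot_le
  by_cases hmn : m = n
  · exact hmn ▸ le_sup_left
  · exact le_sup_of_le_right <| (iterBracket_le hgrad m).trans <|
      le_iSup₂_of_le m hm <| le_iSup_of_le hmn le_rfl

end

theorem graded_piece_eq_bracket_with_level_one
    {K : Type*} [Field K] {L : Type*} [LieRing L] [LieAlgebra K L]
    (F : ℕ → Submodule K L)
    -- `⁅L_i, L_j⁆ ⊆ L_{i+j}` for `i, j ≥ 1`
    (hgrad : ∀ i j : ℕ, 1 ≤ i → 1 ≤ j → subBracket K (F i) (F j) ≤ F (i + j))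
    -- the family `(L_n)_{n ≥ 1}` is linearly independent (its sum is direct)
    (hind : ∀ n : ℕ, 1 ≤ n →
      Disjoint (F n) (⨆ (m : ℕ) (_ : 1 ≤ m) (_ : m ≠ n), F m))
    -- every `L_n` is contained in the Lie subalgebra generated by `L₁`
    (hgen : ∀ n : ℕ, 1 ≤ n →
      F n ≤ (LieSubalgebra.lieSpan K L (F 1 : Set L)).toSubmodule) :
    ∀ n : ℕ, 2 ≤ n → F n = subBracket K (F 1) (F (n - 1)) := by
  have hpiece : ∀ m, 1 ≤ m → iterBracket K (F 1) m = F m := fun m hm =>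
    eq_of_le_of_inf_le_of_le_sup (iterBracket_le hgrad m)
      ((hind m hm).eq_bot ▸ bot_le)
      ((hgen m hm).trans <| (lieSpan_le_iSup_iterBracket _).trans <| iSup_iterBracket_le hgrad m)
  intro n hn
  obtain ⟨k, rfl⟩ : ∃ k, n = k + 2 := ⟨n - 2, by omega⟩
  rw [← hpiece (k + 2) (by omega), show k + 2 - 1 = k + 1 by omega, ← hpiece (k + 1) (by omega)]
  rfl
end

section
/- (eq. 1.3 for the Feingold–Frenkel algebra) For every integer ℓ ≥ 2, the level-ℓ subspace of 𝔤 is obtained by commuting level one with level ℓ−1: F_ℓ = ⁅F₁, F_{ℓ−1}⁆. -/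
/-!
Statement 7 (eq. 1.3 for the Feingold–Frenkel algebra): for the rank-3 hyperbolic
Kac–Moody algebra `𝔉` with Cartan matrix `!![2,-1,0; -1,2,-2; 0,-2,2]`, realized as
`Matrix.ToLieAlgebra ℂ A`, the level-`ℓ` subspace `F_ℓ` (the span of all iterated
brackets of the Chevalley generators `e₀, e₁, e₂` containing exactly `ℓ` occurrences of
`e₀`) satisfies `F_ℓ = ⁅F₁, F_{ℓ-1}⁆` for every `ℓ ≥ 2`.
-/

namespace FeingoldFrenkel

/-- The Cartan matrix of the Feingold–Frenkel algebra `𝔉`. -/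
def FF : Matrix (Fin 3) (Fin 3) ℤ := !![2, -1, 0; -1, 2, -2; 0, -2, 2]

/-- The Feingold–Frenkel hyperbolic Kac–Moody algebra over `ℂ`. -/
noncomputable abbrev 𝔤 : Type := Matrix.ToLieAlgebra ℂ FF

/-- The Chevalley generator `e i` of `𝔤` (the image of the free generator `E i` in the
quotient by the Serre relations); `i = 0` corresponds to the simple root `r₋₁`. -/
noncomputable def e (i : Fin 3) : 𝔤 :=
  LieSubmodule.Quotient.mk (N := CartanMatrix.Relations.toIdeal ℂ FF)
    (FreeLieAlgebra.of ℂ (CartanMatrix.Generators.E i))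

/-- `IsLevelBracket x ℓ` means `x` is an iterated Lie bracket of the generators
`e₀, e₁, e₂` containing exactly `ℓ` occurrences of `e₀`. -/
inductive IsLevelBracket : 𝔤 → ℕ → Prop
  | e0 : IsLevelBracket (e 0) 1
  | e1 : IsLevelBracket (e 1) 0
  | e2 : IsLevelBracket (e 2) 0
  | br {x y : 𝔤} {a b : ℕ} :
      IsLevelBracket x a → IsLevelBracket y b → IsLevelBracket ⁅x, y⁆ (a + b)

/-- The level-`ℓ` subspace `F_ℓ = 𝔉^{(ℓ)}` of the positive half of `𝔉`. -/
noncomputable def F (ℓ : ℕ) : Submodule ℂ 𝔤 :=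
  Submodule.span ℂ {x : 𝔤 | IsLevelBracket x ℓ}

/-- The `ℂ`-submodule spanned by brackets `⁅x, y⁆` with `x ∈ M`, `y ∈ N`. -/
noncomputable def subBracket (M N : Submodule ℂ 𝔤) : Submodule ℂ 𝔤 :=
  Submodule.span ℂ {z : 𝔤 | ∃ x ∈ M, ∃ y ∈ N, z = ⁅x, y⁆}

lemma mem_F_bracket {a b : ℕ} {x y : 𝔤} (hx : x ∈ F a) (hy : y ∈ F b) :
    ⁅x, y⁆ ∈ F (a + b) := by
  induction hx using Submodule.span_induction with
  | mem u hu =>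
    induction hy using Submodule.span_induction with
    | mem v hv => exact Submodule.subset_span (hu.br hv)
    | zero => simp
    | add v w _ _ h1 h2 => rw [lie_add]; exact add_mem h1 h2
    | smul c v _ h1 => rw [lie_smul]; exact Submodule.smul_mem _ c h1
  | zero => simp
  | add u v _ _ h1 h2 => rw [add_lie]; exact add_mem h1 h2
  | smul c u _ h1 => rw [smul_lie]; exact Submodule.smul_mem _ c h1

lemma bracket_zero_mem {u w : 𝔤} {m : ℕ} (hu : u ∈ F 0) (hw : w ∈ subBracket (F 1) (F m)) :
    ⁅u, w⁆ ∈ subBracket (F 1) (F m) := by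
  induction hw using Submodule.span_induction with
  | mem z hz =>
    obtain ⟨s, hs, t, ht, rfl⟩ := hz
    rw [leibniz_lie]
    refine add_mem (Submodule.subset_span ⟨⁅u, s⁆, ?_, t, ht, rfl⟩)
      (Submodule.subset_span ⟨s, hs, ⁅u, t⁆, ?_, rfl⟩)
    · simpa using mem_F_bracket hu hs
    · simpa using mem_F_bracket hu ht
  | zero => simp
  | add v w _ _ h1 h2 => rw [lie_add]; exact add_mem h1 h2
  | smul c v _ h1 => rw [lie_smul]; exact Submodule.smul_mem _ c h1

lemma key {x : 𝔤} {a : ℕ} (hx : IsLevelBracket x a) :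
    1 ≤ a → ∀ b : ℕ, ∀ y ∈ F b, ⁅x, y⁆ ∈ subBracket (F 1) (F (a + b - 1)) := by
  induction hx with
  | e0 =>
    intro _ b y hy
    refine Submodule.subset_span ⟨e 0, Submodule.subset_span IsLevelBracket.e0, y, ?_, rfl⟩
    simpa using hy
  | e1 => exact fun h => absurd h (by omega)
  | e2 => exact fun h => absurd h (by omega)
  | br hu hv ihu ihv =>
    rename_i u v p q
    intro hpq b y hy
    rcases Nat.eq_zero_or_pos p with hp | hp
    · subst hp
      have hq : 1 ≤ q := by simpa using hpq
      have huy : ⁅u, y⁆ ∈ F b := by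
        simpa using mem_F_bracket (Submodule.subset_span hu) hy
      have h1 : ⁅v, ⁅u, y⁆⁆ ∈ subBracket (F 1) (F (q + b - 1)) := ihv hq b _ huy
      have h2 : ⁅u, ⁅v, y⁆⁆ ∈ subBracket (F 1) (F (q + b - 1)) :=
        bracket_zero_mem (Submodule.subset_span hu) (ihv hq b y hy)
      have : (0 + q) + b - 1 = q + b - 1 := by omega
      rw [this, lie_lie]
      exact sub_mem h2 h1
    · have hvy : ⁅v, y⁆ ∈ F (q + b) := mem_F_bracket (Submodule.subset_span hv) hy
      have h1 : ⁅u, ⁅v, y⁆⁆ ∈ subBracket (F 1) (F (p + (q + b) - 1)) := ihu hp _ _ hvy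
      have e1 : p + (q + b) - 1 = (p + q) + b - 1 := by omega
      rw [e1] at h1
      have h2 : ⁅v, ⁅u, y⁆⁆ ∈ subBracket (F 1) (F ((p + q) + b - 1)) := by
        rcases Nat.eq_zero_or_pos q with hq | hq
        · subst hq
          have huy : ⁅u, y⁆ ∈ subBracket (F 1) (F (p + b - 1)) := ihu hp b y hy
          have : (p + 0) + b - 1 = p + b - 1 := by omega
          rw [this]
          exact bracket_zero_mem (Submodule.subset_span hv) huy
        · have huy : ⁅u, y⁆ ∈ F (p + b) := mem_F_bracket (Submodule.subset_span hu) hy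
          have h := ihv hq (p + b) _ huy
          have : q + (p + b) - 1 = (p + q) + b - 1 := by omega
          rwa [this] at h
      rw [lie_lie]
      exact sub_mem h1 h2

theorem level_eq_bracket_level_one (ℓ : ℕ) (hℓ : 2 ≤ ℓ) :
    F ℓ = subBracket (F 1) (F (ℓ - 1)) := by
  apply le_antisymm
  · rw [F]
    apply Submodule.span_le.2
    rintro z hz
    cases hz with
    | e0 => omega
    | e1 => omega
    | e2 => omega
    | br hu hv =>
      rename_i u v p q
      rcases Nat.eq_zero_or_pos p with hp | hp
      · subst hp
        have hq : 1 ≤ q := by omega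
        have h := key hv hq 0 u (Submodule.subset_span hu)
        have e1 : q + 0 - 1 = 0 + q - 1 := by omega
        rw [e1] at h
        have : ⁅u, v⁆ = -⁅v, u⁆ := (neg_eq_iff_eq_neg.2 (lie_skew v u).symm).symm
        rw [this]  -- adjust if needed
        exact neg_mem h
      · have h := key hu hp q v (Submodule.subset_span hv)
        exact h
  · rw [subBracket]
    apply Submodule.span_le.2
    rintro z ⟨x, hx, y, hy, rfl⟩
    have h := mem_F_bracket hx hy
    have : 1 + (ℓ - 1) = ℓ := by omega
    rwa [this] at h


end FeingoldFrenkel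
end

section
/- (Appendix B, final identity fixing the δ-shifts in eq. 2.15) For natural numbers m, n with ℓ = m + 2n + 1 and every k ∈ ℤ with −(m+1) ≤ 2k ≤ 2n, one has the q-series identity f_k − f_{2n+1−k} = q^{k²} ( Σ_{j∈ℤ} q^{(ℓ+1)(ℓ+2)j² + j((ℓ+2)(m+1) − (ℓ+1)(m+2+2k))} − Σ_{j∈ℤ} q^{((ℓ+1)j + m+1)((ℓ+2)j + m+2+2k)} ); explicitly, for every d ∈ ℤ: N_{E_k}(d) + N_{H₂}(d) = N_{E_{2n+1−k}}(d) + N_{H₁}(d), where H₁(j) = k² + (ℓ+1)(ℓ+2)j² + j((ℓ+2)(m+1) − (ℓ+1)(m+2+2k)) and H₂(j) = k² + ((ℓ+1)j + m+1)((ℓ+2)j + m+2+2k). This identifies (f_k^{(ℓ−1,2n)} − f_{2n+1−k}^{(ℓ−1,2n)})/φ(q) with q^{k²} χ^{ℓ+2,ℓ+1}_{m+1, m+2+2k}(q). -/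
/-!
Statement 14 (Appendix B, final identity fixing the δ-shifts in eq. 2.15): for
`ℓ = m + 2n + 1` and `k ∈ K_{m,n}`, the q-series identity
`f_k - f_{2n+1-k} = q^{k²} (Σ_j q^{H₁'(j)} - Σ_j q^{H₂'(j)})`, i.e. for every `d ∈ ℤ`:
`N_{E_k}(d) + N_{H₂}(d) = N_{E_{2n+1-k}}(d) + N_{H₁}(d)`, where
`E_κ(j) = (ℓ+1)(ℓ+2)j² + (2n+1+2κ(ℓ+1))j + κ²`,
`H₁(j) = k² + (ℓ+1)(ℓ+2)j² + j((ℓ+2)(m+1) - (ℓ+1)(m+2+2k))` and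
`H₂(j) = k² + ((ℓ+1)j + m+1)((ℓ+2)j + m+2+2k)`.  This identifies
`(f_k - f_{2n+1-k})/φ(q)` with `q^{k²} χ^{ℓ+2,ℓ+1}_{m+1, m+2+2k}(q)`.
-/

/-- `N_E(d)`: the number of integers `j` with `E j = d`. -/
noncomputable def Ncount (E : ℤ → ℤ) (d : ℤ) : ℕ := Nat.card {j : ℤ // E j = d}

/-- The Kac–Wakimoto exponent polynomial `E_κ^{(ℓ-1,2n)}` with `ℓ = m + 2n + 1`. -/
def fExp (m n : ℕ) (κ : ℤ) (j : ℤ) : ℤ :=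
  (((m : ℤ) + 2 * n + 1) + 1) * (((m : ℤ) + 2 * n + 1) + 2) * j ^ 2
    + (2 * (n : ℤ) + 1 + 2 * κ * (((m : ℤ) + 2 * n + 1) + 1)) * j + κ ^ 2

private lemma Ncount_comp (E : ℤ → ℤ) (σ : ℤ ≃ ℤ) (d : ℤ) :
    Ncount (fun j => E (σ j)) d = Ncount E d :=
  Nat.card_congr (Equiv.subtypeEquiv σ (fun _ => Iff.rfl))

theorem kacWakimoto_character_identity_reflected (m n : ℕ) (k : ℤ)
    (h₁ : -((m : ℤ) + 1) ≤ 2 * k) (h₂ : 2 * k ≤ 2 * (n : ℤ)) (d : ℤ) :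
    Ncount (fExp m n k) d
        + Ncount (fun j : ℤ =>
            k ^ 2 + ((((m : ℤ) + 2 * n + 1) + 1) * j + m + 1)
              * ((((m : ℤ) + 2 * n + 1) + 2) * j + m + 2 + 2 * k)) d
      = Ncount (fExp m n (2 * (n : ℤ) + 1 - k)) d
        + Ncount (fun j : ℤ =>
            k ^ 2 + (((m : ℤ) + 2 * n + 1) + 1) * (((m : ℤ) + 2 * n + 1) + 2) * j ^ 2
              + j * ((((m : ℤ) + 2 * n + 1) + 2) * ((m : ℤ) + 1)
                - (((m : ℤ) + 2 * n + 1) + 1) * ((m : ℤ) + 2 + 2 * k))) d := by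
  have hneg : Ncount (fun j : ℤ =>
      k ^ 2 + (((m : ℤ) + 2 * n + 1) + 1) * (((m : ℤ) + 2 * n + 1) + 2) * j ^ 2
        + j * ((((m : ℤ) + 2 * n + 1) + 2) * ((m : ℤ) + 1)
          - (((m : ℤ) + 2 * n + 1) + 1) * ((m : ℤ) + 2 + 2 * k))) d
      = Ncount (fExp m n k) d := by
    rw [← Ncount_comp (fExp m n k) (Equiv.neg ℤ) d]
    congr 1
    funext j
    simp only [Equiv.neg_apply, fExp]
    push_cast
    ring
  have hshift : Ncount (fun j : ℤ =>
      k ^ 2 + ((((m : ℤ) + 2 * n + 1) + 1) * j + m + 1)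
        * ((((m : ℤ) + 2 * n + 1) + 2) * j + m + 2 + 2 * k)) d
      = Ncount (fExp m n (2 * (n : ℤ) + 1 - k)) d := by
    have hinv : Function.Involutive (fun j : ℤ => -j - 1) := fun j => by ring
    rw [← Ncount_comp (fExp m n (2 * (n : ℤ) + 1 - k)) hinv.toPerm d]
    congr 1
    funext j
    simp only [Function.Involutive.coe_toPerm, fExp]
    push_cast
    ring
  rw [hneg, hshift]
  ring
end
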